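/- For 0 < x < 1 and real numbers a, b with b > a, the integral ∫_x^1 t^a (1-t)^{b-a-1} [(x/t)^a - (x/t)^b] / (t - x) dt equals x^a (1-x)^{b-a-1} · log(1/x). -/

import Mathlib

open MeasureTheory Set Real

/-- `(1-t)^(d-1)` is interval integrable on `x..1` when `d > 0`. -/
lemma aux_rpow_int (x d : ℝ) (hd : 0 < d) :
    IntervalIntegrable (fun t : ℝ => (1 - t) ^ (d - 1)) volume x 1 := by
  have h := (intervalIntegral.intervalIntegrable_rpow' (a := 0) (b := 1 - x)
      (r := d - 1) (by linarith)).comp_sub_left 1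
  norm_num at h
  exact h.symm

/-- Bernoulli-type bound: `1 - (x/t)^d ≤ d (t-x)/x`. -/
lemma aux_bern {x t d : ℝ} (hx0 : 0 < x) (hxt : x < t) (hd : 0 < d) :
    1 - (x / t) ^ d ≤ d * (t - x) / x := by
  have ht0 : 0 < t := hx0.trans hxt
  have hu0 : 0 < x / t := div_pos hx0 ht0
  have key : 1 + (d + 1) * (x / t - 1) ≤ (x / t) ^ (d + 1) := by
    have h := one_add_mul_self_le_rpow_one_add (s := x / t - 1)
      (by linarith) (p := d + 1) (by linarith)
    have e : 1 + (x / t - 1) = x / t := by ring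
    rwa [e] at h
  have hpow : (x / t) ^ (d + 1) = (x / t) ^ d * (x / t) := Real.rpow_add_one hu0.ne' d
  rw [le_div_iff₀ hx0]
  have key2 := mul_le_mul_of_nonneg_right key ht0.le
  rw [hpow] at key2
  have e2 : x / t * t = x := div_mul_cancel₀ x ht0.ne'
  have e3 : (x / t) ^ d * (x / t) * t = (x / t) ^ d * x := by rw [mul_assoc, e2]
  have e4 : (1 + (d + 1) * (x / t - 1)) * t = t + (d + 1) * (x - t) := by
    field_simp
  rw [e3, e4] at key2
  nlinarith [key2]

/-- Claim A: the `w`-integral of the kernel. -/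
lemma aux_claimA (x t d : ℝ) (hx0 : 0 < x) (hxt : x < t) (ht1 : t ≤ 1) (hd : 0 < d) :
    (∫ w in x..1, d * (1 - x) ^ d * (w ^ (d - 1) * (w * (1 - t) + (t - x)) ^ (-d - 1)))
      = (1 - (x / t) ^ d) / (t - x) := by
  have hx1 : x < 1 := lt_of_lt_of_le hxt ht1
  have ht0 : 0 < t := hx0.trans hxt
  have htx : 0 < t - x := by linarith
  have h1x : 0 < 1 - x := by linarith
  set G : ℝ → ℝ := fun w => (1 - x) ^ d * (w ^ d * (w * (1 - t) + (t - x)) ^ (-d)) / (t - x)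
    with hG
  have hB : ∀ w ∈ Set.uIcc x 1, 0 < w * (1 - t) + (t - x) := by
    intro w hw
    rw [Set.uIcc_of_le hx1.le] at hw
    have h1 : 0 ≤ w * (1 - t) := mul_nonneg (le_trans hx0.le hw.1) (by linarith)
    linarith
  have hderiv : ∀ w ∈ Set.uIcc x 1,
      HasDerivAt G (d * (1 - x) ^ d * (w ^ (d - 1) * (w * (1 - t) + (t - x)) ^ (-d - 1))) w := by
    intro w hw
    have hw0 : 0 < w := by
      rw [Set.uIcc_of_le hx1.le] at hw
      exact lt_of_lt_of_le hx0 hw.1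
    have hBw := hB w hw
    have h1 : HasDerivAt (fun w : ℝ => w ^ d) (d * w ^ (d - 1)) w :=
      Real.hasDerivAt_rpow_const (Or.inl hw0.ne')
    have h2 : HasDerivAt (fun w : ℝ => w * (1 - t) + (t - x)) (1 * (1 - t)) w :=
      ((hasDerivAt_id w).mul_const (1 - t)).add_const (t - x)
    have h3 : HasDerivAt (fun w : ℝ => (w * (1 - t) + (t - x)) ^ (-d))
        (1 * (1 - t) * (-d) * (w * (1 - t) + (t - x)) ^ (-d - 1)) w :=
      h2.rpow_const (Or.inl hBw.ne')
    have h4 := ((h1.mul h3).const_mul ((1 - x) ^ d)).div_const (t - x)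
    refine h4.congr_deriv ?_
    have e1 : w ^ d = w ^ (d - 1) * w := by
      rw [← Real.rpow_add_one hw0.ne' (d - 1)]
      norm_num
    have e2 : (w * (1 - t) + (t - x)) ^ (-d)
        = (w * (1 - t) + (t - x)) ^ (-d - 1) * (w * (1 - t) + (t - x)) := by
      rw [← Real.rpow_add_one hBw.ne' (-d - 1)]
      norm_num
    rw [e1, e2]
    field_simp
    ring
  have hcont : ContinuousOn
      (fun w : ℝ => d * (1 - x) ^ d * (w ^ (d - 1) * (w * (1 - t) + (t - x)) ^ (-d - 1)))
      (Set.uIcc x 1) := by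
    apply continuousOn_const.mul
    apply ContinuousOn.mul
    · exact continuousOn_id.rpow_const fun w hw => Or.inl (by
        rw [Set.uIcc_of_le hx1.le] at hw
        exact (lt_of_lt_of_le hx0 hw.1).ne')
    · refine ContinuousOn.rpow_const ?_ fun w hw => Or.inl (hB w hw).ne'
      exact ((continuous_id.mul continuous_const).add continuous_const).continuousOn
  rw [intervalIntegral.integral_eq_sub_of_hasDerivAt hderiv hcont.intervalIntegrable]
  have hB1 : (1 : ℝ) * (1 - t) + (t - x) = 1 - x := by ring
  have hBx : x * (1 - t) + (t - x) = t * (1 - x) := by ring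
  have hG1 : G 1 = (1 - x) ^ d * ((1 : ℝ) ^ d * (1 - x) ^ (-d)) / (t - x) := by
    rw [hG]; simp only []; rw [hB1]
  have hGx : G x = (1 - x) ^ d * (x ^ d * (t ^ (-d) * (1 - x) ^ (-d))) / (t - x) := by
    rw [hG]; simp only []; rw [hBx, Real.mul_rpow ht0.le h1x.le]
  rw [hG1, hGx, Real.one_rpow]
  have m1 : (1 - x) ^ d * (1 - x) ^ (-d) = 1 := by
    rw [← Real.rpow_add h1x]; norm_num
  have m3 : x ^ d * t ^ (-d) = (x / t) ^ d := by
    rw [Real.div_rpow hx0.le ht0.le, Real.rpow_neg ht0.le, div_eq_mul_inv]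
  rw [div_sub_div_same]
  congr 1
  linear_combination (1 - x ^ d * t ^ (-d)) * m1 - m3

/-- Claim B: the `t`-integral of the kernel. -/
lemma aux_claimB (x w d : ℝ) (hx0 : 0 < x) (hx1 : x < 1) (hxw : x < w) (hw1 : w ≤ 1)
    (hd : 0 < d) :
    (∫ t in x..1, d * (1 - x) ^ d *
        ((1 - t) ^ (d - 1) * (w ^ (d - 1) * (w * (1 - t) + (t - x)) ^ (-d - 1))))
      = (1 - x) ^ (d - 1) / w := by
  have hw0 : 0 < w := hx0.trans hxw
  have h1x : 0 < 1 - x := by linarith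
  set A : ℝ → ℝ := fun t =>
    -((1 - x) ^ (d - 1) * (w ^ (d - 1) * ((1 - t) ^ d * (w * (1 - t) + (t - x)) ^ (-d))))
    with hA
  have hBpos : ∀ t ∈ Set.Icc x 1, 0 < w * (1 - t) + (t - x) := by
    intro t ht
    have key : w * (1 - t) + (t - x) = w * (1 - x) + (1 - w) * (t - x) := by ring
    rw [key]
    have h1 : 0 < w * (1 - x) := mul_pos hw0 h1x
    have h2 : 0 ≤ (1 - w) * (t - x) := mul_nonneg (by linarith) (by linarith [ht.1])
    linarith
  have hcont : ContinuousOn A (Set.Icc x 1) := by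
    apply ContinuousOn.neg
    apply continuousOn_const.mul
    apply continuousOn_const.mul
    apply ContinuousOn.mul
    · exact ((continuous_const.sub continuous_id).continuousOn).rpow_const
        fun t _ => Or.inr hd.le
    · refine ContinuousOn.rpow_const ?_ fun t ht => Or.inl (hBpos t ht).ne'
      exact ((continuous_const.mul (continuous_const.sub continuous_id)).add
        (continuous_id.sub continuous_const)).continuousOn
  have hderiv : ∀ t ∈ Set.Ioo x 1, HasDerivWithinAt A
      (d * (1 - x) ^ d *
        ((1 - t) ^ (d - 1) * (w ^ (d - 1) * (w * (1 - t) + (t - x)) ^ (-d - 1))))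
      (Set.Ioi t) t := by
    intro t ht
    have h1t : 0 < 1 - t := by linarith [ht.2]
    have hBt : 0 < w * (1 - t) + (t - x) := hBpos t ⟨ht.1.le, ht.2.le⟩
    have hF : HasDerivAt (fun t : ℝ => (1 - t) ^ d) (-1 * d * (1 - t) ^ (d - 1)) t :=
      (HasDerivAt.const_sub 1 (hasDerivAt_id t)).rpow_const (Or.inl h1t.ne')
    have hBder : HasDerivAt (fun t : ℝ => w * (1 - t) + (t - x)) (w * -1 + 1) t := by
      exact ((HasDerivAt.const_sub 1 (hasDerivAt_id t)).const_mul w).add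
        ((hasDerivAt_id t).sub_const x)
    have hG : HasDerivAt (fun t : ℝ => (w * (1 - t) + (t - x)) ^ (-d))
        ((w * -1 + 1) * (-d) * (w * (1 - t) + (t - x)) ^ (-d - 1)) t :=
      hBder.rpow_const (Or.inl hBt.ne')
    have hA' := (((hF.mul hG).const_mul (w ^ (d - 1))).const_mul ((1 - x) ^ (d - 1))).neg
    have : HasDerivAt A
        (d * (1 - x) ^ d *
          ((1 - t) ^ (d - 1) * (w ^ (d - 1) * (w * (1 - t) + (t - x)) ^ (-d - 1)))) t := by
      refine hA'.congr_deriv ?_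
      have e2 : (w * (1 - t) + (t - x)) ^ (-d)
          = (w * (1 - t) + (t - x)) ^ (-d - 1) * (w * (1 - t) + (t - x)) := by
        rw [← Real.rpow_add_one hBt.ne' (-d - 1)]
        norm_num
      have e3 : (1 - t) ^ d = (1 - t) ^ (d - 1) * (1 - t) := by
        rw [← Real.rpow_add_one h1t.ne' (d - 1)]
        norm_num
      have e4 : (1 - x) ^ d = (1 - x) ^ (d - 1) * (1 - x) := by
        rw [← Real.rpow_add_one h1x.ne' (d - 1)]
        norm_num
      rw [e2, e3, e4]
      ring
    exact this.hasDerivWithinAt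
  have hint : IntervalIntegrable
      (fun t => d * (1 - x) ^ d *
        ((1 - t) ^ (d - 1) * (w ^ (d - 1) * (w * (1 - t) + (t - x)) ^ (-d - 1))))
      volume x 1 := by
    rw [intervalIntegrable_iff_integrableOn_Ioo_of_le hx1.le]
    have base : IntegrableOn (fun t : ℝ => (1 - t) ^ (d - 1)) (Set.Ioo x 1) volume := by
      have h := aux_rpow_int x d hd
      rwa [intervalIntegrable_iff_integrableOn_Ioo_of_le hx1.le] at h
    have hg : IntegrableOn
        (fun t : ℝ => (d * (1 - x) ^ d * (w ^ (d - 1) * (w * (1 - x)) ^ (-d - 1)))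
          * (1 - t) ^ (d - 1)) (Set.Ioo x 1) volume :=
      base.const_mul _
    apply MeasureTheory.Integrable.mono hg
    · apply ContinuousOn.aestronglyMeasurable ?_ measurableSet_Ioo
      apply continuousOn_const.mul
      apply ContinuousOn.mul
      · exact ((continuous_const.sub continuous_id).continuousOn).rpow_const
          fun t ht => Or.inl (ne_of_gt (show (0:ℝ) < 1 - t by linarith [ht.2]))
      · apply continuousOn_const.mul
        refine ContinuousOn.rpow_const ?_ fun t ht =>
          Or.inl (hBpos t ⟨ht.1.le, ht.2.le⟩).ne'
        exact ((continuous_const.mul (continuous_const.sub continuous_id)).add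
          (continuous_id.sub continuous_const)).continuousOn
    · filter_upwards [ae_restrict_mem measurableSet_Ioo] with t ht
      have h1t : 0 ≤ 1 - t := by linarith [ht.2]
      have htx : 0 ≤ t - x := by linarith [ht.1]
      have hBt : 0 < w * (1 - t) + (t - x) := hBpos t ⟨ht.1.le, ht.2.le⟩
      have hwx : 0 < w * (1 - x) := mul_pos hw0 h1x
      have hq : (w * (1 - t) + (t - x)) ^ (-d - 1) ≤ (w * (1 - x)) ^ (-d - 1) := by
        apply Real.rpow_le_rpow_of_nonpos hwx
        · nlinarith [ht.1, ht.2]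
        · linarith
      have hfn : 0 ≤ d * (1 - x) ^ d *
          ((1 - t) ^ (d - 1) * (w ^ (d - 1) * (w * (1 - t) + (t - x)) ^ (-d - 1))) := by
        apply mul_nonneg (mul_nonneg hd.le (Real.rpow_nonneg h1x.le _))
        apply mul_nonneg (Real.rpow_nonneg h1t _)
        exact mul_nonneg (Real.rpow_nonneg hw0.le _) (Real.rpow_nonneg hBt.le _)
      have hgn : 0 ≤ (d * (1 - x) ^ d * (w ^ (d - 1) * (w * (1 - x)) ^ (-d - 1)))
          * (1 - t) ^ (d - 1) := by
        apply mul_nonneg _ (Real.rpow_nonneg h1t _)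
        apply mul_nonneg (mul_nonneg hd.le (Real.rpow_nonneg h1x.le _))
        exact mul_nonneg (Real.rpow_nonneg hw0.le _) (Real.rpow_nonneg hwx.le _)
      rw [Real.norm_of_nonneg hfn, Real.norm_of_nonneg hgn]
      calc d * (1 - x) ^ d *
            ((1 - t) ^ (d - 1) * (w ^ (d - 1) * (w * (1 - t) + (t - x)) ^ (-d - 1)))
          ≤ d * (1 - x) ^ d * ((1 - t) ^ (d - 1) * (w ^ (d - 1) * (w * (1 - x)) ^ (-d - 1))) := by
            apply mul_le_mul_of_nonneg_left _ (mul_nonneg hd.le (Real.rpow_nonneg h1x.le _))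
            apply mul_le_mul_of_nonneg_left _ (Real.rpow_nonneg h1t _)
            exact mul_le_mul_of_nonneg_left hq (Real.rpow_nonneg hw0.le _)
        _ = (d * (1 - x) ^ d * (w ^ (d - 1) * (w * (1 - x)) ^ (-d - 1))) * (1 - t) ^ (d - 1) := by
            ring
  rw [intervalIntegral.integral_eq_sub_of_hasDeriv_right_of_le hx1.le hcont hderiv hint]
  have hA1 : A 1 = 0 := by
    rw [hA]
    simp [Real.zero_rpow hd.ne']
  have hAx : A x = -((1 - x) ^ (d - 1) * (w ^ (d - 1) * ((1 - x) ^ d * (w * (1 - x)) ^ (-d)))) := by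
    simp only [hA]
    rw [show w * (1 - x) + (x - x) = w * (1 - x) from by ring]
  rw [hA1, hAx, zero_sub, neg_neg, Real.mul_rpow hw0.le h1x.le, div_eq_mul_inv]
  have n2 : (1 - x) ^ d * (1 - x) ^ (-d) = 1 := by
    rw [← Real.rpow_add h1x]; norm_num
  have n3 : w ^ (d - 1) * w ^ (-d) = w⁻¹ := by
    rw [← Real.rpow_add hw0]
    have : d - 1 + -d = -1 := by ring
    rw [this, Real.rpow_neg_one]
  linear_combination ((1 - x) ^ (d - 1) * (w ^ (d - 1) * w ^ (-d))) * n2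
    + (1 - x) ^ (d - 1) * n3

/-- Integral equation (39) of the paper specialized to `p = 1`:
for `0 < x < 1` and `b > a`,
`∫_x^1 t^a (1-t)^(b-a-1) ((x/t)^a - (x/t)^b)/(t-x) dt = x^a (1-x)^(b-a-1) log(1/x)`. -/
theorem stmt0 (x a b : ℝ) (hx0 : 0 < x) (hx1 : x < 1) (hab : a < b) :
    ∫ t in x..1, t ^ a * (1 - t) ^ (b - a - 1) * ((x / t) ^ a - (x / t) ^ b) / (t - x)
      = x ^ a * (1 - x) ^ (b - a - 1) * Real.log (1 / x) := by
  have h1x : 0 < 1 - x := by linarith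
  set d : ℝ := b - a with hdd
  have hd : 0 < d := by rw [hdd]; linarith
  have hxa : 0 < x ^ a := Real.rpow_pos_of_pos hx0 a
  set H : ℝ → ℝ → ℝ := fun t w =>
    x ^ a * ((1 - t) ^ (d - 1) *
      (d * (1 - x) ^ d * (w ^ (d - 1) * (w * (1 - t) + (t - x)) ^ (-d - 1)))) with hH
  -- Claim A in set-integral form, with the prefactor
  have claimA' : ∀ t ∈ Set.Ioo x 1,
      (∫ w in Set.Ioo x 1, H t w)
        = x ^ a * ((1 - t) ^ (d - 1) * ((1 - (x / t) ^ d) / (t - x))) := by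
    intro t ht
    have e : (∫ w in Set.Ioo x 1, H t w)
        = x ^ a * ((1 - t) ^ (d - 1) * (∫ w in Set.Ioo x 1,
            d * (1 - x) ^ d * (w ^ (d - 1) * (w * (1 - t) + (t - x)) ^ (-d - 1)))) := by
      rw [hH]
      rw [MeasureTheory.integral_const_mul, MeasureTheory.integral_const_mul]
    rw [e]
    have hA := aux_claimA x t d hx0 ht.1 ht.2.le hd
    rw [intervalIntegral.integral_of_le hx1.le, MeasureTheory.integral_Ioc_eq_integral_Ioo] at hA
    rw [hA]
  -- the original integrand equals the `w`-integral of `H t ·` on `Ioo x 1`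
  have halg : ∀ t ∈ Set.Ioo x 1,
      t ^ a * (1 - t) ^ (d - 1) * ((x / t) ^ a - (x / t) ^ b) / (t - x)
        = x ^ a * ((1 - t) ^ (d - 1) * ((1 - (x / t) ^ d) / (t - x))) := by
    intro t ht
    have ht0 : 0 < t := hx0.trans ht.1
    have htx : t - x ≠ 0 := sub_ne_zero.2 ht.1.ne'
    have hu0 : 0 < x / t := div_pos hx0 ht0
    have e1 : (x / t) ^ b = (x / t) ^ a * (x / t) ^ d := by
      rw [← Real.rpow_add hu0]
      congr 1
      rw [hdd]; ring
    have e2 : t ^ a * (x / t) ^ a = x ^ a := by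
      rw [← Real.mul_rpow ht0.le hu0.le]
      congr 1
      field_simp
    calc t ^ a * (1 - t) ^ (d - 1) * ((x / t) ^ a - (x / t) ^ b) / (t - x)
        = (t ^ a * (x / t) ^ a) * ((1 - t) ^ (d - 1) * ((1 - (x / t) ^ d) / (t - x))) := by
          rw [e1]; field_simp
      _ = x ^ a * ((1 - t) ^ (d - 1) * ((1 - (x / t) ^ d) / (t - x))) := by rw [e2]
  -- integrability of the kernel on the product
  have hInt : Integrable (Function.uncurry H)
      ((volume.restrict (Set.Ioo x 1)).prod (volume.restrict (Set.Ioo x 1))) := by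
    have hmeas : AEStronglyMeasurable (Function.uncurry H)
        ((volume.restrict (Set.Ioo x 1)).prod (volume.restrict (Set.Ioo x 1))) := by
      rw [MeasureTheory.Measure.prod_restrict]
      apply ContinuousOn.aestronglyMeasurable ?_ (measurableSet_Ioo.prod measurableSet_Ioo)
      apply continuousOn_const.mul
      apply ContinuousOn.mul
      · apply ContinuousOn.rpow_const (continuous_const.sub continuous_fst).continuousOn
        rintro ⟨t, w⟩ hp
        exact Or.inl (ne_of_gt (show (0:ℝ) < 1 - t by linarith [hp.1.2]))
      · apply continuousOn_const.mul
        apply ContinuousOn.mul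
        · apply ContinuousOn.rpow_const continuous_snd.continuousOn
          rintro ⟨t, w⟩ hp
          exact Or.inl (hx0.trans hp.2.1).ne'
        · apply ContinuousOn.rpow_const
          · exact ((continuous_snd.mul (continuous_const.sub continuous_fst)).add
              (continuous_fst.sub continuous_const)).continuousOn
          · rintro ⟨t, w⟩ hp
            refine Or.inl (ne_of_gt ?_)
            have h1 : 0 < w * (1 - t) :=
              mul_pos (hx0.trans hp.2.1) (by linarith [hp.1.2])
            have h2 : 0 < t - x := by linarith [hp.1.1]
            linarith
    refine (MeasureTheory.integrable_prod_iff hmeas).2 ⟨?_, ?_⟩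
    · -- sections in `w` are integrable
      filter_upwards [ae_restrict_mem measurableSet_Ioo] with t ht
      have hsec : ContinuousOn (fun w => H t w) (Set.Icc x 1) := by
        rw [hH]
        apply continuousOn_const.mul
        apply continuousOn_const.mul
        apply continuousOn_const.mul
        apply ContinuousOn.mul
        · exact continuousOn_id.rpow_const fun w hw =>
            Or.inl (lt_of_lt_of_le hx0 hw.1).ne'
        · apply ContinuousOn.rpow_const
          · exact ((continuous_id.mul continuous_const).add continuous_const).continuousOn
          · intro w hw
            refine Or.inl (ne_of_gt ?_)
            have h1 : 0 ≤ w * (1 - t) :=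
              mul_nonneg (le_trans hx0.le hw.1) (by linarith [ht.2])
            have h2 : 0 < t - x := by linarith [ht.1]
            linarith
      exact (hsec.integrableOn_Icc).mono_set Set.Ioo_subset_Icc_self
    · -- integrability of the norms
      have hφ : Integrable
          (fun t => x ^ a * ((1 - t) ^ (d - 1) * ((1 - (x / t) ^ d) / (t - x))))
          (volume.restrict (Set.Ioo x 1)) := by
        have base : IntegrableOn (fun t : ℝ => (1 - t) ^ (d - 1)) (Set.Ioo x 1) volume := by
          have h := aux_rpow_int x d hd
          rwa [intervalIntegrable_iff_integrableOn_Ioo_of_le hx1.le] at h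
        have hg : IntegrableOn (fun t : ℝ => (x ^ a * (d / x)) * (1 - t) ^ (d - 1))
            (Set.Ioo x 1) volume := base.const_mul _
        apply MeasureTheory.Integrable.mono hg
        · apply ContinuousOn.aestronglyMeasurable ?_ measurableSet_Ioo
          apply continuousOn_const.mul
          apply ContinuousOn.mul
          · exact ((continuous_const.sub continuous_id).continuousOn).rpow_const
              fun t ht => Or.inl (ne_of_gt (show (0:ℝ) < 1 - t by linarith [ht.2]))
          · apply ContinuousOn.div
            · apply ContinuousOn.sub continuousOn_const
              apply ContinuousOn.rpow_const
              · exact (continuousOn_const.div continuous_id.continuousOn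
                  fun t ht => (hx0.trans ht.1).ne')
              · intro t ht
                exact Or.inl (div_pos hx0 (hx0.trans ht.1)).ne'
            · exact (continuous_id.sub continuous_const).continuousOn
            · intro t ht
              exact sub_ne_zero.2 ht.1.ne'
        · filter_upwards [ae_restrict_mem measurableSet_Ioo] with t ht
          have ht0 : 0 < t := hx0.trans ht.1
          have htx : 0 < t - x := by linarith [ht.1]
          have h1t : 0 ≤ 1 - t := by linarith [ht.2]
          have hu1 : x / t ≤ 1 := (div_le_one ht0).2 ht.1.le
          have hu0 : 0 ≤ x / t := (div_pos hx0 ht0).le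
          have hnum : 0 ≤ 1 - (x / t) ^ d := by
            have := Real.rpow_le_one hu0 hu1 hd.le
            linarith
          have h5 : (1 - (x / t) ^ d) / (t - x) ≤ d / x := by
            rw [div_le_div_iff₀ htx hx0]
            have hb := aux_bern hx0 ht.1 hd
            calc (1 - (x / t) ^ d) * x ≤ (d * (t - x) / x) * x :=
                  mul_le_mul_of_nonneg_right hb hx0.le
              _ = d * (t - x) := div_mul_cancel₀ _ hx0.ne'
          have hφn : 0 ≤ x ^ a * ((1 - t) ^ (d - 1) * ((1 - (x / t) ^ d) / (t - x))) := by
            apply mul_nonneg hxa.le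
            exact mul_nonneg (Real.rpow_nonneg h1t _) (div_nonneg hnum htx.le)
          have hψn : 0 ≤ (x ^ a * (d / x)) * (1 - t) ^ (d - 1) :=
            mul_nonneg (mul_nonneg hxa.le (div_nonneg hd.le hx0.le))
              (Real.rpow_nonneg h1t _)
          rw [Real.norm_of_nonneg hφn, Real.norm_of_nonneg hψn]
          calc x ^ a * ((1 - t) ^ (d - 1) * ((1 - (x / t) ^ d) / (t - x)))
              ≤ x ^ a * ((1 - t) ^ (d - 1) * (d / x)) := by
                apply mul_le_mul_of_nonneg_left _ hxa.le
                exact mul_le_mul_of_nonneg_left h5 (Real.rpow_nonneg h1t _)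
            _ = (x ^ a * (d / x)) * (1 - t) ^ (d - 1) := by ring
      apply hφ.congr
      filter_upwards [ae_restrict_mem measurableSet_Ioo] with t ht
      simp only [Function.uncurry_apply_pair]
      have e : (∫ w in Set.Ioo x 1, ‖H t w‖) = ∫ w in Set.Ioo x 1, H t w := by
        apply MeasureTheory.setIntegral_congr_fun measurableSet_Ioo
        intro w hw
        apply Real.norm_of_nonneg
        rw [hH]
        have h1t : 0 ≤ 1 - t := by linarith [ht.2]
        have hw0 : 0 < w := hx0.trans hw.1
        have hBn : 0 ≤ w * (1 - t) + (t - x) := by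
          have h1 : 0 ≤ w * (1 - t) := mul_nonneg hw0.le h1t
          have h2 : 0 < t - x := by linarith [ht.1]
          linarith
        apply mul_nonneg hxa.le
        apply mul_nonneg (Real.rpow_nonneg h1t _)
        apply mul_nonneg (mul_nonneg hd.le (Real.rpow_nonneg h1x.le _))
        exact mul_nonneg (Real.rpow_nonneg hw0.le _) (Real.rpow_nonneg hBn _)
      rw [e, claimA' t ht]
  -- the main computation
  rw [intervalIntegral.integral_of_le hx1.le, MeasureTheory.integral_Ioc_eq_integral_Ioo]
  rw [MeasureTheory.setIntegral_congr_fun measurableSet_Ioo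
    (g := fun t => ∫ w in Set.Ioo x 1, H t w)
    (fun t ht => by
      show _ = ∫ w in Set.Ioo x 1, H t w
      rw [claimA' t ht]; exact halg t ht)]
  rw [MeasureTheory.integral_integral_swap hInt]
  rw [MeasureTheory.setIntegral_congr_fun measurableSet_Ioo
    (g := fun w => (x ^ a * (1 - x) ^ (d - 1)) * (1 / w)) (fun w hw => by
      show (∫ t in Set.Ioo x 1, H t w) = (x ^ a * (1 - x) ^ (d - 1)) * (1 / w)
      have hB := aux_claimB x w d hx0 hx1 hw.1 hw.2.le hd
      rw [intervalIntegral.integral_of_le hx1.le,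
        MeasureTheory.integral_Ioc_eq_integral_Ioo] at hB
      have e : (∫ t in Set.Ioo x 1, H t w)
          = x ^ a * ∫ t in Set.Ioo x 1,
              d * (1 - x) ^ d *
                ((1 - t) ^ (d - 1) * (w ^ (d - 1) * (w * (1 - t) + (t - x)) ^ (-d - 1))) := by
        rw [← MeasureTheory.integral_const_mul]
        apply MeasureTheory.setIntegral_congr_fun measurableSet_Ioo
        intro t _
        rw [hH]
        ring
      rw [e, hB]
      ring)]
  rw [MeasureTheory.integral_const_mul]
  rw [← MeasureTheory.integral_Ioc_eq_integral_Ioo, ← intervalIntegral.integral_of_le hx1.le]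
  rw [integral_one_div (by
    rw [Set.uIcc_of_le hx1.le]
    intro h
    exact absurd h.1 (by linarith))]
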